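/- Let H be a thick spider with partition (S, K, R) such that the subgraph H[R] of H induced by R is P4-sparse, let u ∈ R, and let uw be a tail added to H (w ∉ V(H)). Let f' be the minimum number of fill edges (excluding uw) in a P4-sparse completion of the graph H[R]+uw. Then the minimum number of fill edges (excluding the tail uw) in a P4-sparse completion of H+uw equals |K| + f'. -/

import Mathlib

open SimpleGraph Set

variable {α : Type*}

/-- The graph `G + uw` obtained from `G` by adding the tail edge `uw`. -/
def addTail (G : SimpleGraph α) (u w : α) : SimpleGraph α :=
  G ⊔ SimpleGraph.fromEdgeSet {s(u, w)}

/-- The number of fill edges of a completion `G'` of the base graph `base`: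
the edges of `G'` that are not edges of `base`. -/
noncomputable def fillCount (base G' : SimpleGraph α) : ℕ :=
  (G'.edgeSet \ base.edgeSet).ncard

/-- `S` is an independent set of the graph `G`. -/
def IsIndepSetOn (G : SimpleGraph α) (S : Set α) : Prop :=
  ∀ x ∈ S, ∀ y ∈ S, ¬ G.Adj x y

/-- A graph is split if its vertex set can be partitioned into a clique and an
independent set. -/
def IsSplitGraph (G : SimpleGraph α) : Prop :=
  ∃ K S : Set α, K ∪ S = Set.univ ∧ Disjoint K S ∧ G.IsClique K ∧ IsIndepSetOn G S

/-- `a b c d` (in this order) induce a chordless path `P₄` in `G`. -/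
def IsInducedP4 (G : SimpleGraph α) (a b c d : α) : Prop :=
  a ≠ b ∧ a ≠ c ∧ a ≠ d ∧ b ≠ c ∧ b ≠ d ∧ c ≠ d ∧
  G.Adj a b ∧ G.Adj b c ∧ G.Adj c d ∧ ¬ G.Adj a c ∧ ¬ G.Adj a d ∧ ¬ G.Adj b d

/-- `a b c d` (in this order) induce a chordless cycle `C₄` in `G`. -/
def IsInducedC4 (G : SimpleGraph α) (a b c d : α) : Prop :=
  a ≠ b ∧ a ≠ c ∧ a ≠ d ∧ b ≠ c ∧ b ≠ d ∧ c ≠ d ∧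
  G.Adj a b ∧ G.Adj b c ∧ G.Adj c d ∧ G.Adj d a ∧ ¬ G.Adj a c ∧ ¬ G.Adj b d

/-- `a b c d` induce a `2K₂` (two independent edges `ab` and `cd`) in `G`. -/
def IsInduced2K2 (G : SimpleGraph α) (a b c d : α) : Prop :=
  a ≠ b ∧ a ≠ c ∧ a ≠ d ∧ b ≠ c ∧ b ≠ d ∧ c ≠ d ∧
  G.Adj a b ∧ G.Adj c d ∧ ¬ G.Adj a c ∧ ¬ G.Adj a d ∧ ¬ G.Adj b c ∧ ¬ G.Adj b d

/-- A graph is threshold iff it has no induced `C₄`, `P₄`, or `2K₂`. -/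
def IsThresholdGraph (G : SimpleGraph α) : Prop :=
  (∀ a b c d, ¬ IsInducedC4 G a b c d) ∧ (∀ a b c d, ¬ IsInducedP4 G a b c d) ∧
  (∀ a b c d, ¬ IsInduced2K2 G a b c d)

/-- A graph is quasi-threshold iff it has no induced `C₄` or `P₄`. -/
def IsQuasiThresholdGraph (G : SimpleGraph α) : Prop :=
  (∀ a b c d, ¬ IsInducedC4 G a b c d) ∧ (∀ a b c d, ¬ IsInducedP4 G a b c d)

/-- `t` is the vertex set of an induced `P₄` of `G`. -/
def IsP4SetOn (G : SimpleGraph α) (t : Set α) : Prop :=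
  ∃ a b c d : α, t = {a, b, c, d} ∧ IsInducedP4 G a b c d

/-- A graph is `P₄`-sparse iff every set of five vertices induces at most one `P₄`. -/
def IsP4Sparse (G : SimpleGraph α) : Prop :=
  ∀ s : Set α, s.ncard = 5 →
    ∀ t₁ ⊆ s, ∀ t₂ ⊆ s, IsP4SetOn G t₁ → IsP4SetOn G t₂ → t₁ = t₂

/-- The subgraph of `H` induced by the set `R` (as a graph on the same vertex type,
all vertices outside `R` being isolated). -/
def restrictSet (H : SimpleGraph α) (R : Set α) : SimpleGraph α where
  Adj x y := H.Adj x y ∧ x ∈ R ∧ y ∈ R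
  symm := by
    first
    | exact ⟨fun x y h => ⟨h.1.symm, h.2.2, h.2.1⟩⟩
    | exact fun x y h => ⟨h.1.symm, h.2.2, h.2.1⟩
  loopless := ⟨fun x h => H.loopless.irrefl x h.1⟩

/-- `(S, K, R)` is a thin-spider partition of (the vertex set of) `H`. -/
def ThinSpider (H : SimpleGraph α) (S K R : Set α) : Prop :=
  IsIndepSetOn H S ∧ H.IsClique K ∧ S.ncard = K.ncard ∧ 2 ≤ K.ncard ∧
  Disjoint S K ∧ Disjoint S R ∧ Disjoint K R ∧
  (∀ r ∈ R, ∀ k ∈ K, H.Adj r k) ∧ (∀ r ∈ R, ∀ s ∈ S, ¬ H.Adj r s) ∧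
  ∃ f : α → α, Set.BijOn f S K ∧ ∀ s ∈ S, ∀ k ∈ K, (H.Adj s k ↔ k = f s)

/-- `(S, K, R)` is a thick-spider partition of (the vertex set of) `H`;
thick spiders are assumed to have `|K| ≥ 3`. -/
def ThickSpider (H : SimpleGraph α) (S K R : Set α) : Prop :=
  IsIndepSetOn H S ∧ H.IsClique K ∧ S.ncard = K.ncard ∧ 3 ≤ K.ncard ∧
  Disjoint S K ∧ Disjoint S R ∧ Disjoint K R ∧
  (∀ r ∈ R, ∀ k ∈ K, H.Adj r k) ∧ (∀ r ∈ R, ∀ s ∈ S, ¬ H.Adj r s) ∧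
  ∃ f : α → α, Set.BijOn f S K ∧ ∀ s ∈ S, ∀ k ∈ K, (H.Adj s k ↔ k ≠ f s)

/-- The set of possible numbers of fill edges of completions of `base` into the
graph class `C`. -/
def completionFills (C : SimpleGraph α → Prop) (base : SimpleGraph α) : Set ℕ :=
  {n | ∃ G' : SimpleGraph α, base ≤ G' ∧ C G' ∧ fillCount base G' = n}
section MyHelpers
variable {β : Type*} [Finite β]

private lemma my_ncard5 {x1 x2 x3 x4 x5 : β}
    (h12 : x1 ≠ x2) (h13 : x1 ≠ x3) (h14 : x1 ≠ x4) (h15 : x1 ≠ x5)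
    (h23 : x2 ≠ x3) (h24 : x2 ≠ x4) (h25 : x2 ≠ x5)
    (h34 : x3 ≠ x4) (h35 : x3 ≠ x5) (h45 : x4 ≠ x5) :
    ({x1, x2, x3, x4, x5} : Set β).ncard = 5 := by
  rw [Set.ncard_insert_of_notMem (by simp [h12, h13, h14, h15]),
      Set.ncard_insert_of_notMem (by simp [h23, h24, h25]),
      Set.ncard_insert_of_notMem (by simp [h34, h35]),
      Set.ncard_insert_of_notMem (by simp [h45]),
      Set.ncard_singleton]

private lemma my_six {s : Set β} (h5 : s.ncard = 5) {x1 x2 x3 x4 x5 x6 : β}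
    (h12 : x1 ≠ x2) (h13 : x1 ≠ x3) (h14 : x1 ≠ x4) (h15 : x1 ≠ x5) (h16 : x1 ≠ x6)
    (h23 : x2 ≠ x3) (h24 : x2 ≠ x4) (h25 : x2 ≠ x5) (h26 : x2 ≠ x6)
    (h34 : x3 ≠ x4) (h35 : x3 ≠ x5) (h36 : x3 ≠ x6)
    (h45 : x4 ≠ x5) (h46 : x4 ≠ x6) (h56 : x5 ≠ x6)
    (m1 : x1 ∈ s) (m2 : x2 ∈ s) (m3 : x3 ∈ s) (m4 : x4 ∈ s) (m5 : x5 ∈ s) (m6 : x6 ∈ s) :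
    False := by
  have hsub : ({x1, x2, x3, x4, x5, x6} : Set β) ⊆ s := by
    intro z hz
    simp only [Set.mem_insert_iff, Set.mem_singleton_iff] at hz
    rcases hz with rfl | rfl | rfl | rfl | rfl | rfl <;> assumption
  have h6 : ({x1, x2, x3, x4, x5, x6} : Set β).ncard = 6 := by
    rw [Set.ncard_insert_of_notMem (by simp [h12, h13, h14, h15, h16]),
        Set.ncard_insert_of_notMem (by simp [h23, h24, h25, h26]),
        Set.ncard_insert_of_notMem (by simp [h34, h35, h36]),
        Set.ncard_insert_of_notMem (by simp [h45, h46]),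
        Set.ncard_insert_of_notMem (by simp [h56]),
        Set.ncard_singleton]
  have := Set.ncard_le_ncard hsub
  omega

end MyHelpers

set_option maxHeartbeats 2000000
/-- tail at `u ∈ R` of a thick spider with `H[R]` P₄-sparse, where `f'`
is the minimum number of fill edges of a P₄-sparse completion of `H[R]+uw`. -/
theorem thickSpider_tail_R [Fintype α]
    (H : SimpleGraph α) (u w : α) (S K R : Set α)
    (hspider : ThickSpider H S K R)
    (hcover : S ∪ K ∪ R = {w}ᶜ)
    (hw : ∀ x, ¬ H.Adj w x)
    (hRsparse : IsP4Sparse (restrictSet H R)) (hu : u ∈ R)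
    (f' : ℕ)
    (hf' : IsLeast {n | ∃ G'' : SimpleGraph α,
        addTail (restrictSet H R) u w ≤ G'' ∧
        (∀ x y, G''.Adj x y → x ∈ R ∪ {w} ∧ y ∈ R ∪ {w}) ∧
        IsP4Sparse G'' ∧ fillCount (addTail (restrictSet H R) u w) G'' = n} f') :
    IsLeast (completionFills IsP4Sparse (addTail H u w)) (K.ncard + f') := by
  classical
  obtain ⟨hSind, hKcl, hSKcard, hK3, hdSK, hdSR, hdKR, hRK, hRS, f, hfbij, hfadj⟩ := hspider
  have hinj := hfbij.injOn
  have hneW : ∀ x, x ∈ S ∪ K ∪ R → x ≠ w := by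
    intro x hx
    rw [hcover] at hx
    simpa using hx
  have hSw : ∀ x ∈ S, x ≠ w := fun x hx => hneW x (Or.inl (Or.inl hx))
  have hKw : ∀ x ∈ K, x ≠ w := fun x hx => hneW x (Or.inl (Or.inr hx))
  have hRw : ∀ x ∈ R, x ≠ w := fun x hx => hneW x (Or.inr hx)
  have hwS : w ∉ S := fun h => hSw w h rfl
  have hwK : w ∉ K := fun h => hKw w h rfl
  have hwR : w ∉ R := fun h => hRw w h rfl
  have hSnK : ∀ x ∈ S, x ∉ K := fun x hx hk => Set.disjoint_left.mp hdSK hx hk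
  have hSnR : ∀ x ∈ S, x ∉ R := fun x hx hr => Set.disjoint_left.mp hdSR hx hr
  have hKnR : ∀ x ∈ K, x ∉ R := fun x hx hr => Set.disjoint_left.mp hdKR hx hr
  have hSQ : ∀ x ∈ S, x ∉ R ∪ {w} := by
    rintro x hx (h | h)
    · exact hSnR x hx h
    · exact hSw x hx h
  have hKQ : ∀ x ∈ K, x ∉ R ∪ {w} := by
    rintro x hx (h | h)
    · exact hKnR x hx h
    · exact hKw x hx h
  have huw : u ≠ w := hRw u hu
  have hwnK : ∀ k ∈ K, w ≠ k := fun k hk h => hwK (by rw [h]; exact hk)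
  have hwnS : ∀ x ∈ S, w ≠ x := fun x hx h => hwS (by rw [h]; exact hx)
  have hunK : ∀ k ∈ K, u ≠ k := fun k hk h => hKnR k hk (by rw [← h]; exact hu)
  have hunS : ∀ x ∈ S, u ≠ x := fun x hx h => hSnR x hx (by rw [← h]; exact hu)
  have hKnS : ∀ k ∈ K, ∀ x ∈ S, k ≠ x := fun k hk x hx h => hSnK x hx (by rw [← h]; exact hk)
  have hpart : ∀ x, x ∈ S ∨ x ∈ K ∨ x ∈ R ∪ {w} := by
    intro x
    by_cases hx : x = w
    · exact Or.inr (Or.inr (Or.inr (by simp [hx])))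
    · have : x ∈ S ∪ K ∪ R := by rw [hcover]; simpa using hx
      rcases this with (h | h) | h
      · exact Or.inl h
      · exact Or.inr (Or.inl h)
      · exact Or.inr (Or.inr (Or.inl h))
  have hG₀adj : ∀ x y, (addTail H u w).Adj x y ↔
      H.Adj x y ∨ (x = u ∧ y = w) ∨ (x = w ∧ y = u) := by
    intro x y
    unfold addTail
    rw [sup_adj, fromEdgeSet_adj]
    simp only [Set.mem_singleton_iff, Sym2.eq_iff]
    constructor
    · rintro (h | ⟨⟨rfl, rfl⟩ | ⟨rfl, rfl⟩, -⟩)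
      · exact Or.inl h
      · exact Or.inr (Or.inl ⟨rfl, rfl⟩)
      · exact Or.inr (Or.inr ⟨rfl, rfl⟩)
    · rintro (h | ⟨rfl, rfl⟩ | ⟨rfl, rfl⟩)
      · exact Or.inl h
      · exact Or.inr ⟨Or.inl ⟨rfl, rfl⟩, huw⟩
      · exact Or.inr ⟨Or.inr ⟨rfl, rfl⟩, huw.symm⟩
  have hBadj : ∀ x y, (addTail (restrictSet H R) u w).Adj x y ↔
      (H.Adj x y ∧ x ∈ R ∧ y ∈ R) ∨ ((x = u ∧ y = w) ∨ (x = w ∧ y = u)) := by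
    intro x y
    unfold addTail
    rw [sup_adj, fromEdgeSet_adj]
    simp only [Set.mem_singleton_iff, Sym2.eq_iff]
    constructor
    · rintro (h | ⟨⟨rfl, rfl⟩ | ⟨rfl, rfl⟩, -⟩)
      · exact Or.inl h
      · exact Or.inr (Or.inl ⟨rfl, rfl⟩)
      · exact Or.inr (Or.inr ⟨rfl, rfl⟩)
    · rintro (h | ⟨rfl, rfl⟩ | ⟨rfl, rfl⟩)
      · exact Or.inl h
      · exact Or.inr ⟨Or.inl ⟨rfl, rfl⟩, huw⟩
      · exact Or.inr ⟨Or.inr ⟨rfl, rfl⟩, huw.symm⟩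
  constructor
  · -- membership: construct the completion
    obtain ⟨G'', hle'', hsupp'', hsp'', hfc''⟩ := hf'.1
    set Gc := H ⊔ G'' ⊔ fromEdgeSet ((fun k => s(w, k)) '' K) with hGcdef
    have hWK : ∀ x y, (fromEdgeSet ((fun k => s(w, k)) '' K)).Adj x y ↔
        ((x = w ∧ y ∈ K) ∨ (y = w ∧ x ∈ K)) := by
      intro x y
      rw [fromEdgeSet_adj]
      constructor
      · rintro ⟨⟨k, hk, hke⟩, hne⟩
        rcases Sym2.eq_iff.mp hke with ⟨rfl, rfl⟩ | ⟨rfl, rfl⟩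
        · exact Or.inl ⟨rfl, hk⟩
        · exact Or.inr ⟨rfl, hk⟩
      · rintro (⟨rfl, hy⟩ | ⟨rfl, hx⟩)
        · exact ⟨⟨y, hy, rfl⟩, fun h => hwK (by rw [h]; exact hy)⟩
        · exact ⟨⟨x, hx, by rw [Sym2.eq_swap]⟩, fun h => hwK (by rw [← h]; exact hx)⟩
    have hGcadj : ∀ x y, Gc.Adj x y ↔
        H.Adj x y ∨ G''.Adj x y ∨ (x = w ∧ y ∈ K) ∨ (y = w ∧ x ∈ K) := by
      intro x y
      rw [hGcdef]
      simp only [sup_adj]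
      rw [hWK x y]
      tauto
    have hGcSS : ∀ x ∈ S, ∀ y ∈ S, ¬ Gc.Adj x y := by
      intro x hx y hy h
      rcases (hGcadj x y).mp h with h | h | ⟨rfl, hyK⟩ | ⟨rfl, hxK⟩
      · exact hSind x hx y hy h
      · exact hSQ x hx (hsupp'' x y h).1
      · exact hwS hx
      · exact hSnK x hx hxK
    have hGcSQ : ∀ x ∈ S, ∀ y ∈ R ∪ {w}, ¬ Gc.Adj x y := by
      intro x hx y hy h
      rcases (hGcadj x y).mp h with h | h | ⟨rfl, hyK⟩ | ⟨rfl, hxK⟩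
      · rcases hy with hyR | hyw
        · exact hRS y hyR x hx h.symm
        · have hyw' : y = w := hyw
          rw [hyw'] at h
          exact hw x h.symm
      · exact hSQ x hx (hsupp'' x y h).1
      · exact hwS hx
      · exact hSnK x hx hxK
    have hGcKK : ∀ x ∈ K, ∀ y ∈ K, x ≠ y → Gc.Adj x y := fun x hx y hy hne =>
      (hGcadj x y).mpr (Or.inl (hKcl hx hy hne))
    have hGcKQ : ∀ x ∈ K, ∀ y ∈ R ∪ {w}, Gc.Adj x y := by
      intro x hx y hy
      rcases hy with hyR | hyw
      · exact (hGcadj x y).mpr (Or.inl ((hRK y hyR x hx).symm))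
      · have hyw' : y = w := hyw
        rw [hyw']
        exact (hGcadj x w).mpr (Or.inr (Or.inr (Or.inr ⟨rfl, hx⟩)))
    have hGcSK : ∀ x ∈ S, ∀ y ∈ K, (Gc.Adj x y ↔ y ≠ f x) := by
      intro x hx y hy
      constructor
      · intro h
        rcases (hGcadj x y).mp h with h | h | ⟨rfl, hyK⟩ | ⟨rfl, hxK⟩
        · exact (hfadj x hx y hy).mp h
        · exact absurd (hsupp'' x y h).1 (hSQ x hx)
        · exact absurd hx hwS
        · exact absurd hxK (hSnK x hx)
      · intro h
        exact (hGcadj x y).mpr (Or.inl ((hfadj x hx y hy).mpr h))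
    have hGcQQ : ∀ x ∈ R ∪ {w}, ∀ y ∈ R ∪ {w}, (Gc.Adj x y ↔ G''.Adj x y) := by
      intro x hx y hy
      constructor
      · intro h
        rcases (hGcadj x y).mp h with h | h | ⟨rfl, hyK⟩ | ⟨rfl, hxK⟩
        · have hxR : x ∈ R := by
            rcases hx with h' | h'
            · exact h'
            · exact absurd h (by rw [show x = w from h']; exact hw y)
          have hyR : y ∈ R := by
            rcases hy with h' | h'
            · exact h'
            · exact absurd h (by rw [show y = w from h']; exact fun hh => hw x hh.symm)
          refine hle'' ?_
          exact (hBadj x y).mpr (Or.inl ⟨h, hxR, hyR⟩)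
        · exact h
        · exact absurd hy (hKQ y hyK)
        · exact absurd hx (hKQ x hxK)
      · intro h
        exact (hGcadj x y).mpr (Or.inr (Or.inl h))
    have hclass : ∀ a b c d, IsInducedP4 Gc a b c d →
        (a ∈ R ∪ {w} ∧ b ∈ R ∪ {w} ∧ c ∈ R ∪ {w} ∧ d ∈ R ∪ {w}) ∨
        (a ∈ S ∧ b ∈ K ∧ c ∈ K ∧ d ∈ S ∧ c = f a ∧ b = f d) := by
      rintro a b c d ⟨hab, hac, had, hbc, hbd, hcd, eab, ebc, ecd, nac, nad, nbd⟩
      rcases hpart b with hbS | hbK | hbQ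
      · have haK : a ∈ K := by
          rcases hpart a with h | h | h
          · exact absurd eab (hGcSS a h b hbS)
          · exact h
          · exact absurd eab.symm (hGcSQ b hbS a h)
        have hcK : c ∈ K := by
          rcases hpart c with h | h | h
          · exact absurd ebc (hGcSS b hbS c h)
          · exact h
          · exact absurd ebc (hGcSQ b hbS c h)
        exact absurd (hGcKK a haK c hcK hac) nac
      · rcases hpart c with hcS | hcK | hcQ
        · have hdK : d ∈ K := by
            rcases hpart d with h | h | h
            · exact absurd ecd (hGcSS c hcS d h)
            · exact h
            · exact absurd ecd (hGcSQ c hcS d h)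
          exact absurd (hGcKK b hbK d hdK hbd) nbd
        · have hdS : d ∈ S := by
            rcases hpart d with h | h | h
            · exact h
            · exact absurd (hGcKK b hbK d h hbd) nbd
            · exact absurd (hGcKQ b hbK d h) nbd
          have haS : a ∈ S := by
            rcases hpart a with h | h | h
            · exact h
            · exact absurd (hGcKK a h c hcK hac) nac
            · exact absurd (hGcKQ c hcK a h).symm nac
          have h1 : c = f a := by
            by_contra hne
            exact nac ((hGcSK a haS c hcK).mpr hne)
          have h2 : b = f d := by
            by_contra hne
            exact nbd ((hGcSK d hdS b hbK).mpr hne).symm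
          exact Or.inr ⟨haS, hbK, hcK, hdS, h1, h2⟩
        · rcases hpart d with h | h | h
          · exact absurd ecd.symm (hGcSQ d h c hcQ)
          · exact absurd (hGcKK b hbK d h hbd) nbd
          · exact absurd (hGcKQ b hbK d h) nbd
      · rcases hpart c with hcS | hcK | hcQ
        · exact absurd ebc.symm (hGcSQ c hcS b hbQ)
        · rcases hpart a with h | h | h
          · exact absurd eab (hGcSQ a h b hbQ)
          · exact absurd (hGcKK a h c hcK hac) nac
          · exact absurd (hGcKQ c hcK a h).symm nac
        · have haQ : a ∈ R ∪ {w} := by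
            rcases hpart a with h | h | h
            · exact absurd eab (hGcSQ a h b hbQ)
            · exact absurd (hGcKQ a h c hcQ) nac
            · exact h
          have hdQ : d ∈ R ∪ {w} := by
            rcases hpart d with h | h | h
            · exact absurd ecd.symm (hGcSQ d h c hcQ)
            · exact absurd (hGcKQ d h b hbQ).symm nbd
            · exact h
          exact Or.inl ⟨haQ, hbQ, hcQ, hdQ⟩
    have conv : ∀ p q r t : α, p ∈ R ∪ {w} → q ∈ R ∪ {w} → r ∈ R ∪ {w} → t ∈ R ∪ {w} →
        IsInducedP4 Gc p q r t → IsInducedP4 G'' p q r t := by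
      rintro p q r t h1 h2 h3 h4 ⟨n1, n2, n3, n4, n5, n6, e1, e2, e3, m1, m2, m3⟩
      refine ⟨n1, n2, n3, n4, n5, n6, (hGcQQ p h1 q h2).mp e1, (hGcQQ q h2 r h3).mp e2,
        (hGcQQ r h3 t h4).mp e3, ?_, ?_, ?_⟩
      · exact fun h => m1 ((hGcQQ p h1 r h3).mpr h)
      · exact fun h => m2 ((hGcQQ p h1 t h4).mpr h)
      · exact fun h => m3 ((hGcQQ q h2 t h4).mpr h)
    have hGcsparse : IsP4Sparse Gc := by
      intro s5 h5 t₁ ht₁ t₂ ht₂ hp₁ hp₂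
      obtain ⟨a, b, c, d, rfl, hP⟩ := hp₁
      obtain ⟨a', b', c', d', rfl, hP'⟩ := hp₂
      have hma : a ∈ s5 := ht₁ (by simp)
      have hmb : b ∈ s5 := ht₁ (by simp)
      have hmc : c ∈ s5 := ht₁ (by simp)
      have hmd : d ∈ s5 := ht₁ (by simp)
      have hma' : a' ∈ s5 := ht₂ (by simp)
      have hmb' : b' ∈ s5 := ht₂ (by simp)
      have hmc' : c' ∈ s5 := ht₂ (by simp)
      have hmd' : d' ∈ s5 := ht₂ (by simp)
      rcases hclass a b c d hP with ⟨haQ, hbQ, hcQ, hdQ⟩ | ⟨haS, hbK, hcK, hdS, hcf, hbf⟩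
      · rcases hclass a' b' c' d' hP' with ⟨haQ', hbQ', hcQ', hdQ'⟩ |
          ⟨haS', hbK', hcK', hdS', hcf', hbf'⟩
        · exact hsp'' s5 h5 _ ht₁ _ ht₂ ⟨a, b, c, d, rfl, conv a b c d haQ hbQ hcQ hdQ hP⟩
            ⟨a', b', c', d', rfl, conv a' b' c' d' haQ' hbQ' hcQ' hdQ' hP'⟩
        · -- t₁ inside Q, t₂ spider type: 6 distinct elements a b c d a' b'
          exact (my_six h5 hP.1 hP.2.1 hP.2.2.1
              (fun h => hSQ a' haS' (by rw [← h]; exact haQ))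
              (fun h => hKQ b' hbK' (by rw [← h]; exact haQ))
              hP.2.2.2.1 hP.2.2.2.2.1
              (fun h => hSQ a' haS' (by rw [← h]; exact hbQ))
              (fun h => hKQ b' hbK' (by rw [← h]; exact hbQ))
              hP.2.2.2.2.2.1
              (fun h => hSQ a' haS' (by rw [← h]; exact hcQ))
              (fun h => hKQ b' hbK' (by rw [← h]; exact hcQ))
              (fun h => hSQ a' haS' (by rw [← h]; exact hdQ))
              (fun h => hKQ b' hbK' (by rw [← h]; exact hdQ))
              hP'.1 hma hmb hmc hmd hma' hmb').elim
      · rcases hclass a' b' c' d' hP' with ⟨haQ', hbQ', hcQ', hdQ'⟩ |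
          ⟨haS', hbK', hcK', hdS', hcf', hbf'⟩
        · -- t₁ spider, t₂ inside Q
          exact (my_six h5 hP'.1 hP'.2.1 hP'.2.2.1
              (fun h => hSQ a haS (by rw [← h]; exact haQ'))
              (fun h => hKQ b hbK (by rw [← h]; exact haQ'))
              hP'.2.2.2.1 hP'.2.2.2.2.1
              (fun h => hSQ a haS (by rw [← h]; exact hbQ'))
              (fun h => hKQ b hbK (by rw [← h]; exact hbQ'))
              hP'.2.2.2.2.2.1
              (fun h => hSQ a haS (by rw [← h]; exact hcQ'))
              (fun h => hKQ b hbK (by rw [← h]; exact hcQ'))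
              (fun h => hSQ a haS (by rw [← h]; exact hdQ'))
              (fun h => hKQ b hbK (by rw [← h]; exact hdQ'))
              hP.1 hma' hmb' hmc' hmd' hma hmb).elim
        · -- both spider type
          have ha' : a = a' ∨ a = d' := by
            by_contra hcon
            push_neg at hcon
            obtain ⟨h1, h2⟩ := hcon
            exact my_six h5 hP'.1 hP'.2.1 hP'.2.2.1
              (Ne.symm h1)
              (fun h => hSnK a' haS' (by rw [h]; exact hcK))
              hP'.2.2.2.1 hP'.2.2.2.2.1
              (fun h => hSnK a haS (by rw [← h]; exact hbK'))
              (fun h => h2 ((hinj hdS' haS (by rw [← hbf', ← hcf]; exact h)).symm))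
              hP'.2.2.2.2.2.1
              (fun h => hSnK a haS (by rw [← h]; exact hcK'))
              (fun h => h1 ((hinj haS' haS (by rw [← hcf', ← hcf]; exact h)).symm))
              (Ne.symm h2)
              (fun h => hSnK d' hdS' (by rw [h]; exact hcK))
              (fun h => hSnK a haS (by rw [h]; exact hcK))
              hma' hmb' hmc' hmd' hma hmc
          have hd' : d = a' ∨ d = d' := by
            by_contra hcon
            push_neg at hcon
            obtain ⟨h1, h2⟩ := hcon
            exact my_six h5 hP'.1 hP'.2.1 hP'.2.2.1
              (Ne.symm h1)
              (fun h => hSnK a' haS' (by rw [h]; exact hbK))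
              hP'.2.2.2.1 hP'.2.2.2.2.1
              (fun h => hSnK d hdS (by rw [← h]; exact hbK'))
              (fun h => h2 ((hinj hdS' hdS (by rw [← hbf', ← hbf]; exact h)).symm))
              hP'.2.2.2.2.2.1
              (fun h => hSnK d hdS (by rw [← h]; exact hcK'))
              (fun h => h1 ((hinj haS' hdS (by rw [← hcf', ← hbf]; exact h)).symm))
              (Ne.symm h2)
              (fun h => hSnK d' hdS' (by rw [h]; exact hbK))
              (fun h => hSnK d hdS (by rw [h]; exact hbK))
              hma' hmb' hmc' hmd' hmd hmb
          have hnad : a ≠ d := hP.2.2.1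
          rcases ha' with p | p <;> rcases hd' with q | q
          · exact absurd (p.trans q.symm) hnad
          · have hc : c = c' := by rw [hcf, hcf', p]
            have hb : b = b' := by rw [hbf, hbf', q]
            rw [p, hb, hc, q]
          · have hc : c = b' := by rw [hcf, hbf', p]
            have hb : b = c' := by rw [hbf, hcf', q]
            rw [p, hb, hc, q]
            ext z
            simp only [Set.mem_insert_iff, Set.mem_singleton_iff]
            tauto
          · exact absurd (p.trans q.symm) hnad
    have hfill : Gc.edgeSet \ (addTail H u w).edgeSet
        = ((fun k => s(w, k)) '' K) ∪
          (G''.edgeSet \ (addTail (restrictSet H R) u w).edgeSet) := by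
      ext e
      induction e using Sym2.ind with
      | _ x y =>
        simp only [Set.mem_diff, Set.mem_union, mem_edgeSet]
        constructor
        · rintro ⟨hGcxy, hnG₀⟩
          rcases (hGcadj x y).mp hGcxy with h | h | ⟨rfl, hyK⟩ | ⟨rfl, hxK⟩
          · exact absurd ((hG₀adj x y).mpr (Or.inl h)) hnG₀
          · refine Or.inr ⟨h, ?_⟩
            intro hbase
            apply hnG₀
            rcases (hBadj x y).mp hbase with ⟨hH, -, -⟩ | htail
            · exact (hG₀adj x y).mpr (Or.inl hH)
            · exact (hG₀adj x y).mpr (Or.inr htail)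
          · exact Or.inl ⟨y, hyK, rfl⟩
          · exact Or.inl ⟨x, hxK, by rw [Sym2.eq_swap]⟩
        · rintro (⟨k, hkK, hke⟩ | ⟨hG'', hnb⟩)
          · rcases Sym2.eq_iff.mp hke with ⟨e1, e2⟩ | ⟨e1, e2⟩
            · rw [← e1, ← e2]
              refine ⟨(hGcadj w k).mpr (Or.inr (Or.inr (Or.inl ⟨rfl, hkK⟩))), ?_⟩
              intro h
              rcases (hG₀adj w k).mp h with h | ⟨h1, -⟩ | ⟨-, h2⟩
              · exact hw k h
              · exact huw h1.symm
              · exact hKnR k hkK (by rw [h2]; exact hu)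
            · rw [← e1, ← e2]
              refine ⟨(hGcadj k w).mpr (Or.inr (Or.inr (Or.inr ⟨rfl, hkK⟩))), ?_⟩
              intro h
              rcases (hG₀adj k w).mp h with h | ⟨h1, -⟩ | ⟨-, h2⟩
              · exact hw k h.symm
              · exact hKnR k hkK (by rw [h1]; exact hu)
              · exact huw h2.symm
          · refine ⟨(hGcadj x y).mpr (Or.inr (Or.inl hG'')), ?_⟩
            intro h
            apply hnb
            rcases (hG₀adj x y).mp h with hH | htail
            · have hxQ := (hsupp'' x y hG'').1
              have hyQ := (hsupp'' x y hG'').2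
              have hxR : x ∈ R := by
                rcases hxQ with h' | h'
                · exact h'
                · exact absurd hH (by rw [show x = w from h']; exact hw y)
              have hyR : y ∈ R := by
                rcases hyQ with h' | h'
                · exact h'
                · exact absurd hH (by rw [show y = w from h']; exact fun hh => hw x hh.symm)
              exact (hBadj x y).mpr (Or.inl ⟨hH, hxR, hyR⟩)
            · exact (hBadj x y).mpr (Or.inr htail)
    have hdisjWF : Disjoint ((fun k => s(w, k)) '' K)
        (G''.edgeSet \ (addTail (restrictSet H R) u w).edgeSet) := by
      rw [Set.disjoint_left]
      rintro e ⟨k, hkK, rfl⟩ ⟨hmem, -⟩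
      have : G''.Adj w k := hmem
      exact hKQ k hkK (hsupp'' w k this).2
    have hcard1 : ((fun k => s(w, k)) '' K).ncard = K.ncard := by
      apply Set.ncard_image_of_injOn
      intro k1 h1 k2 h2 he
      rcases Sym2.eq_iff.mp he with ⟨-, h⟩ | ⟨h, h'⟩
      · exact h
      · exact absurd (h' ▸ h1) hwK
    refine ⟨Gc, ?_, hGcsparse, ?_⟩
    · intro x y hxy
      rcases (hG₀adj x y).mp hxy with h | ⟨h1, h2⟩ | ⟨h1, h2⟩
      · exact (hGcadj x y).mpr (Or.inl h)
      · rw [h1, h2]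
        exact (hGcadj u w).mpr (Or.inr (Or.inl (hle''
          ((hBadj u w).mpr (Or.inr (Or.inl ⟨rfl, rfl⟩))))))
      · rw [h1, h2]
        exact (hGcadj w u).mpr (Or.inr (Or.inl (hle''
          ((hBadj w u).mpr (Or.inr (Or.inr ⟨rfl, rfl⟩))))))
    · show (Gc.edgeSet \ (addTail H u w).edgeSet).ncard = K.ncard + f'
      rw [hfill, Set.ncard_union_eq hdisjWF, hcard1, ← hfc'']
      rfl
  · -- lower bound
    rintro n ⟨G', hle, hsp, rfl⟩
    have hHle : ∀ x y, H.Adj x y → G'.Adj x y := fun x y hxy =>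
      hle ((hG₀adj x y).mpr (Or.inl hxy))
    have hG'uw : G'.Adj u w := hle ((hG₀adj u w).mpr (Or.inr (Or.inl ⟨rfl, rfl⟩)))
    set F := G'.edgeSet \ (addTail H u w).edgeSet with hFdef
    set F₁ := (restrictSet G' (R ∪ {w})).edgeSet \ (addTail (restrictSet H R) u w).edgeSet
      with hF₁def
    have hF₁F : F₁ ⊆ F := by
      intro e
      induction e using Sym2.ind with
      | _ x y =>
        rintro ⟨hres, hnb⟩
        have hres' : (restrictSet G' (R ∪ {w})).Adj x y := hres
        refine ⟨hres'.1, ?_⟩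
        intro hG₀
        apply hnb
        rcases (hG₀adj x y).mp hG₀ with hH | htail
        · have hxR : x ∈ R := by
            rcases hres'.2.1 with h' | h'
            · exact h'
            · exact absurd hH (by rw [show x = w from h']; exact hw y)
          have hyR : y ∈ R := by
            rcases hres'.2.2 with h' | h'
            · exact h'
            · exact absurd hH (by rw [show y = w from h']; exact fun hh => hw x hh.symm)
          exact (hBadj x y).mpr (Or.inl ⟨hH, hxR, hyR⟩)
        · exact (hBadj x y).mpr (Or.inr htail)
    have hf'le : f' ≤ F₁.ncard := by
      refine hf'.2 ⟨restrictSet G' (R ∪ {w}), ?_, ?_, ?_, rfl⟩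
      · intro x y hxy
        rcases (hBadj x y).mp hxy with ⟨hH, hxR, hyR⟩ | (⟨h1, h2⟩ | ⟨h1, h2⟩)
        · exact ⟨hHle x y hH, Or.inl hxR, Or.inl hyR⟩
        · rw [h1, h2]
          exact ⟨hG'uw, Or.inl hu, Or.inr rfl⟩
        · rw [h1, h2]
          exact ⟨hG'uw.symm, Or.inr rfl, Or.inl hu⟩
      · exact fun x y h => ⟨h.2.1, h.2.2⟩
      · intro s5 h5 t₁ ht₁ t₂ ht₂ hp₁ hp₂
        have conv : ∀ t, IsP4SetOn (restrictSet G' (R ∪ {w})) t → IsP4SetOn G' t := by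
          rintro t ⟨p, q, r, v, rfl, n1, n2, n3, n4, n5, n6, e1, e2, e3, m1, m2, m3⟩
          refine ⟨p, q, r, v, rfl, n1, n2, n3, n4, n5, n6, e1.1, e2.1, e3.1, ?_, ?_, ?_⟩
          · exact fun h => m1 ⟨h, e1.2.1, e2.2.2⟩
          · exact fun h => m2 ⟨h, e1.2.1, e3.2.2⟩
          · exact fun h => m3 ⟨h, e1.2.2, e3.2.2⟩
        exact hsp s5 h5 t₁ ht₁ t₂ ht₂ (conv t₁ hp₁) (conv t₂ hp₂)
    have hsplit : (F \ F₁).ncard + F₁.ncard = F.ncard :=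
      Set.ncard_diff_add_ncard_of_subset hF₁F
    suffices hK2 : K.ncard ≤ (F \ F₁).ncard by
      show K.ncard + f' ≤ F.ncard
      omega
    by_contra hcon
    push_neg at hcon
    set A := {k ∈ K | G'.Adj w k} with hAdef
    set B := {x ∈ S | G'.Adj u x ∨ G'.Adj w x} with hBdef
    have hF₂mem : ∀ x y : α, G'.Adj x y → ¬ (addTail H u w).Adj x y → y ∉ R ∪ {w} →
        s(x, y) ∈ F \ F₁ := by
      intro x y h1 h2 hy
      refine ⟨⟨h1, h2⟩, ?_⟩
      intro hmem
      rw [hF₁def] at hmem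
      have : (restrictSet G' (R ∪ {w})).Adj x y := hmem.1
      exact hy this.2.2
    have hAK : A ⊆ K := fun k hk => hk.1
    have hBS : B ⊆ S := fun x hx => hx.1
    have hEA : ((fun k => s(w, k)) '' A) ⊆ F \ F₁ := by
      rintro e ⟨k, hk, rfl⟩
      obtain ⟨hkK, hadj⟩ := hk
      refine hF₂mem w k hadj ?_ (hKQ k hkK)
      intro h
      rcases (hG₀adj w k).mp h with h | ⟨h1, -⟩ | ⟨-, h2⟩
      · exact hw k h
      · exact huw h1.symm
      · exact hKnR k hkK (by rw [h2]; exact hu)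
    have hEB : ((fun x => if G'.Adj u x then s(u, x) else s(w, x)) '' B) ⊆ F \ F₁ := by
      rintro e ⟨x, hx, rfl⟩
      obtain ⟨hxS, hor⟩ := hx
      show (if G'.Adj u x then s(u, x) else s(w, x)) ∈ F \ F₁
      by_cases hux : G'.Adj u x
      · rw [if_pos hux]
        refine hF₂mem u x hux ?_ (hSQ x hxS)
        intro h
        rcases (hG₀adj u x).mp h with h | ⟨-, h2⟩ | ⟨h1, -⟩
        · exact hRS u hu x hxS h
        · exact hSw x hxS h2
        · exact huw h1
      · rw [if_neg hux]
        have hwx : G'.Adj w x := hor.resolve_left hux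
        refine hF₂mem w x hwx ?_ (hSQ x hxS)
        intro h
        rcases (hG₀adj w x).mp h with h | ⟨h1, -⟩ | ⟨-, h2⟩
        · exact hw x h
        · exact huw h1.symm
        · exact hSnR x hxS (by rw [h2]; exact hu)
    have hcardEA : ((fun k => s(w, k)) '' A).ncard = A.ncard := by
      apply Set.ncard_image_of_injOn
      intro k1 h1 k2 h2 he
      rcases Sym2.eq_iff.mp he with ⟨-, h⟩ | ⟨h, h'⟩
      · exact h
      · exact absurd (h' ▸ hAK h1) hwK
    have hcardEB : ((fun x => if G'.Adj u x then s(u, x) else s(w, x)) '' B).ncard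
        = B.ncard := by
      apply Set.ncard_image_of_injOn
      intro x1 h1 x2 h2 he0
      have he : (if G'.Adj u x1 then s(u, x1) else s(w, x1))
          = (if G'.Adj u x2 then s(u, x2) else s(w, x2)) := he0
      have hx1S := hBS h1
      have hx2S := hBS h2
      by_cases c1 : G'.Adj u x1 <;> by_cases c2 : G'.Adj u x2
      · rw [if_pos c1, if_pos c2] at he
        rcases Sym2.eq_iff.mp he with ⟨-, h⟩ | ⟨h, -⟩
        · exact h
        · exact absurd (h ▸ hu) (hSnR x2 hx2S)
      · rw [if_pos c1, if_neg c2] at he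
        rcases Sym2.eq_iff.mp he with ⟨h, -⟩ | ⟨h, -⟩
        · exact absurd h huw
        · exact absurd (h ▸ hu) (hSnR x2 hx2S)
      · rw [if_neg c1, if_pos c2] at he
        rcases Sym2.eq_iff.mp he with ⟨h, -⟩ | ⟨-, h⟩
        · exact absurd h.symm huw
        · exact absurd (h ▸ hu) (hSnR x1 hx1S)
      · rw [if_neg c1, if_neg c2] at he
        rcases Sym2.eq_iff.mp he with ⟨-, h⟩ | ⟨h, -⟩
        · exact h
        · exact absurd (show w ∈ S by rw [h]; exact hx2S) hwS
    have hdisjAB : Disjoint ((fun k => s(w, k)) '' A)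
        ((fun x => if G'.Adj u x then s(u, x) else s(w, x)) '' B) := by
      rw [Set.disjoint_left]
      rintro e ⟨k, hk, rfl⟩ ⟨x, hxB, hxe0⟩
      have hkK := hAK hk
      have hxS := hBS hxB
      have hxe : (if G'.Adj u x then s(u, x) else s(w, x)) = s(w, k) := hxe0
      by_cases c : G'.Adj u x
      · rw [if_pos c] at hxe
        rcases Sym2.eq_iff.mp hxe with ⟨h1, -⟩ | ⟨h1, -⟩
        · exact huw h1
        · exact hKnR k hkK (by rw [← h1]; exact hu)
      · rw [if_neg c] at hxe
        rcases Sym2.eq_iff.mp hxe with ⟨-, h⟩ | ⟨h, -⟩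
        · exact hSnK x hxS (by rw [h]; exact hkK)
        · exact hwK (by rw [h]; exact hkK)
    have hABle : A.ncard + B.ncard ≤ (F \ F₁).ncard := by
      rw [← hcardEA, ← hcardEB, ← Set.ncard_union_eq hdisjAB]
      exact Set.ncard_le_ncard (Set.union_subset hEA hEB)
    have hSL : ∀ k ∈ K, k ∉ A → ∀ x ∈ S, x ∉ B → f x ≠ k → IsInducedP4 G' w u k x := by
      intro k hkK hkA x hxS hxB hfx
      have hnwk : ¬ G'.Adj w k := fun h => hkA ⟨hkK, h⟩
      have hnux : ¬ G'.Adj u x := fun h => hxB ⟨hxS, Or.inl h⟩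
      have hnwx : ¬ G'.Adj w x := fun h => hxB ⟨hxS, Or.inr h⟩
      exact ⟨huw.symm, hwnK k hkK, hwnS x hxS, hunK k hkK, hunS x hxS, hKnS k hkK x hxS,
        hG'uw.symm, hHle u k (hRK u hu k hkK),
        (hHle x k ((hfadj x hxS k hkK).mpr (Ne.symm hfx))).symm, hnwk, hnwx, hnux⟩
    have hconf3 : ∀ p q r x y : α, p ≠ q → p ≠ r → p ≠ x → p ≠ y → q ≠ r → q ≠ x → q ≠ y →
        r ≠ x → r ≠ y → x ≠ y →
        IsP4SetOn G' {p, q, r, x} → IsP4SetOn G' {p, q, r, y} → False := by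
      intro p q r x y hpq hpr hpx hpy hqr hqx hqy hrx hry hxy h1 h2
      have h5 : ({p, q, r, x, y} : Set α).ncard = 5 :=
        my_ncard5 hpq hpr hpx hpy hqr hqx hqy hrx hry hxy
      have hsub1 : ({p, q, r, x} : Set α) ⊆ {p, q, r, x, y} := by
        intro z hz
        simp only [Set.mem_insert_iff, Set.mem_singleton_iff] at hz ⊢
        tauto
      have hsub2 : ({p, q, r, y} : Set α) ⊆ {p, q, r, x, y} := by
        intro z hz
        simp only [Set.mem_insert_iff, Set.mem_singleton_iff] at hz ⊢
        tauto
      have heq := hsp _ h5 _ hsub1 _ hsub2 h1 h2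
      have hxmem : x ∈ ({p, q, r, y} : Set α) := by rw [← heq]; simp
      simp only [Set.mem_insert_iff, Set.mem_singleton_iff] at hxmem
      rcases hxmem with h | h | h | h
      exacts [hpx h.symm, hqx h.symm, hrx h.symm, hxy h]
    have hAlt : A.ncard < K.ncard := lt_of_le_of_lt (Nat.le_add_right _ _)
      (lt_of_le_of_lt hABle hcon)
    obtain ⟨k₀, hk₀K, hk₀A⟩ := Set.exists_mem_notMem_of_ncard_lt_ncard hAlt
    have hBlt : B.ncard < S.ncard := by
      have : B.ncard ≤ A.ncard + B.ncard := Nat.le_add_left _ _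
      omega
    obtain ⟨x₀, hx₀S, hx₀B⟩ := Set.exists_mem_notMem_of_ncard_lt_ncard hBlt
    have hSBsplit : (S \ B).ncard + B.ncard = S.ncard :=
      Set.ncard_diff_add_ncard_of_subset hBS
    have hKAsplit : (K \ A).ncard + A.ncard = K.ncard :=
      Set.ncard_diff_add_ncard_of_subset hAK
    have hSB2 : (S \ B).ncard ≤ 2 := by
      by_contra hgt
      push_neg at hgt
      obtain ⟨t, hts, ht3⟩ := Set.exists_subset_card_eq (n := 3) hgt
      obtain ⟨x, y, z, hxy, hxz, hyz, rfl⟩ := Set.ncard_eq_three.mp ht3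
      have hx := hts (show x ∈ ({x, y, z} : Set α) by simp)
      have hy := hts (show y ∈ ({x, y, z} : Set α) by simp)
      have hz := hts (show z ∈ ({x, y, z} : Set α) by simp)
      have key : ∀ a b : α, a ∈ S \ B → b ∈ S \ B → a ≠ b → f a ≠ k₀ → f b ≠ k₀ → False := by
        intro a b ha hb hab hfa hfb
        exact hconf3 w u k₀ a b huw.symm (hwnK k₀ hk₀K) (hwnS a ha.1) (hwnS b hb.1)
          (hunK k₀ hk₀K) (hunS a ha.1) (hunS b hb.1) (hKnS k₀ hk₀K a ha.1)
          (hKnS k₀ hk₀K b hb.1) hab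
          ⟨w, u, k₀, a, rfl, hSL k₀ hk₀K hk₀A a ha.1 ha.2 hfa⟩
          ⟨w, u, k₀, b, rfl, hSL k₀ hk₀K hk₀A b hb.1 hb.2 hfb⟩
      by_cases hfx : f x = k₀
      · exact key y z hy hz hyz (fun h => hxy (hinj hx.1 hy.1 (hfx.trans h.symm)))
          (fun h => hxz (hinj hx.1 hz.1 (hfx.trans h.symm)))
      · by_cases hfy : f y = k₀
        · exact key x z hx hz hxz hfx (fun h => hyz (hinj hy.1 hz.1 (hfy.trans h.symm)))
        · exact key x y hx hy hxy hfx hfy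
    have hKA2 : (K \ A).ncard ≤ 2 := by
      by_contra hgt
      push_neg at hgt
      obtain ⟨t, hts, ht3⟩ := Set.exists_subset_card_eq (n := 3) hgt
      obtain ⟨k1, k2, k3, h12, h13, h23, rfl⟩ := Set.ncard_eq_three.mp ht3
      have m1 := hts (show k1 ∈ ({k1, k2, k3} : Set α) by simp)
      have m2 := hts (show k2 ∈ ({k1, k2, k3} : Set α) by simp)
      have m3 := hts (show k3 ∈ ({k1, k2, k3} : Set α) by simp)
      have key : ∀ a b : α, a ∈ K \ A → b ∈ K \ A → a ≠ b → f x₀ ≠ a → f x₀ ≠ b → False := by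
        intro a b ha hb hab hfa hfb
        refine hconf3 w u x₀ a b huw.symm (hwnS x₀ hx₀S) (hwnK a ha.1) (hwnK b hb.1)
          (hunS x₀ hx₀S) (hunK a ha.1) (hunK b hb.1) (Ne.symm (hKnS a ha.1 x₀ hx₀S))
          (Ne.symm (hKnS b hb.1 x₀ hx₀S)) hab ?_ ?_
        · refine ⟨w, u, a, x₀, ?_, hSL a ha.1 ha.2 x₀ hx₀S hx₀B hfa⟩
          ext zz
          simp only [Set.mem_insert_iff, Set.mem_singleton_iff]
          tauto
        · refine ⟨w, u, b, x₀, ?_, hSL b hb.1 hb.2 x₀ hx₀S hx₀B hfb⟩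
          ext zz
          simp only [Set.mem_insert_iff, Set.mem_singleton_iff]
          tauto
      by_cases hf1 : f x₀ = k1
      · exact key k2 k3 m2 m3 h23 (fun h => h12 (hf1.symm.trans h))
          (fun h => h13 (hf1.symm.trans h))
      · by_cases hf2 : f x₀ = k2
        · exact key k1 k3 m1 m3 h13 hf1 (fun h => h23 (hf2.symm.trans h))
        · exact key k1 k2 m1 m2 h12 hf1 hf2
    have hK3' : K.ncard = 3 := by omega
    have hA1 : A.ncard = 1 := by omega
    have hB1 : B.ncard = 1 := by omega
    obtain ⟨kst, hAeq⟩ := Set.ncard_eq_one.mp hA1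
    obtain ⟨sst, hBeq⟩ := Set.ncard_eq_one.mp hB1
    have hkstA : kst ∈ A := by rw [hAeq]; exact Set.mem_singleton _
    have hkstK : kst ∈ K := hAK hkstA
    have hwkst : G'.Adj w kst := hkstA.2
    have hsstB : sst ∈ B := by rw [hBeq]; exact Set.mem_singleton _
    have hsstS : sst ∈ S := hBS hsstB
    have hsstor : G'.Adj u sst ∨ G'.Adj w sst := hsstB.2
    have hnwk : ∀ k ∈ K, k ≠ kst → ¬ G'.Adj w k := by
      intro k hk hne h
      apply hne
      have : k ∈ A := ⟨hk, h⟩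
      rw [hAeq] at this
      exact this
    have hnB : ∀ x ∈ S, x ≠ sst → ¬ G'.Adj u x ∧ ¬ G'.Adj w x := by
      intro x hx hne
      have hmem : ∀ (_ : G'.Adj u x ∨ G'.Adj w x), False := by
        intro h
        apply hne
        have : x ∈ B := ⟨hx, h⟩
        rw [hBeq] at this
        exact this
      exact ⟨fun h => hmem (Or.inl h), fun h => hmem (Or.inr h)⟩
    have hKdiff : (K \ {kst}).ncard = 2 := by
      have := Set.ncard_diff_singleton_of_mem hkstK
      omega
    obtain ⟨ka, kb, hkab, hKabeq⟩ := Set.ncard_eq_two.mp hKdiff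
    have hkaM : ka ∈ K \ {kst} := by rw [hKabeq]; simp
    have hkbM : kb ∈ K \ {kst} := by rw [hKabeq]; simp
    have hkaK : ka ∈ K := hkaM.1
    have hkbK : kb ∈ K := hkbM.1
    have hkane : ka ≠ kst := by simpa using hkaM.2
    have hkbne : kb ≠ kst := by simpa using hkbM.2
    have hfsst : f sst = kst := by
      by_contra hne
      obtain ⟨s₀, hs₀S, hfs₀⟩ := hfbij.surjOn hkstK
      have hs₀B : s₀ ∉ B := by
        rw [hBeq]
        simp only [Set.mem_singleton_iff]
        intro h
        exact hne (by rw [← h]; exact hfs₀)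
      refine hconf3 w u s₀ ka kb huw.symm (hwnS s₀ hs₀S) (hwnK ka hkaK) (hwnK kb hkbK)
        (hunS s₀ hs₀S) (hunK ka hkaK) (hunK kb hkbK) (Ne.symm (hKnS ka hkaK s₀ hs₀S))
        (Ne.symm (hKnS kb hkbK s₀ hs₀S)) hkab ?_ ?_
      · refine ⟨w, u, ka, s₀, ?_, hSL ka hkaK (fun hA' => hkane (by rw [hAeq] at hA'; exact hA'))
          s₀ hs₀S hs₀B (by rw [hfs₀]; exact Ne.symm hkane)⟩
        ext zz
        simp only [Set.mem_insert_iff, Set.mem_singleton_iff]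
        tauto
      · refine ⟨w, u, kb, s₀, ?_, hSL kb hkbK (fun hA' => hkbne (by rw [hAeq] at hA'; exact hA'))
          s₀ hs₀S hs₀B (by rw [hfs₀]; exact Ne.symm hkbne)⟩
        ext zz
        simp only [Set.mem_insert_iff, Set.mem_singleton_iff]
        tauto
    have hEABeq : ((fun k => s(w, k)) '' A) ∪
        ((fun x => if G'.Adj u x then s(u, x) else s(w, x)) '' B) = F \ F₁ := by
      apply Set.eq_of_subset_of_ncard_le (Set.union_subset hEA hEB)
      rw [Set.ncard_union_eq hdisjAB, hcardEA, hcardEB]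
      omega
    have hnotadj : ∀ x y : α, ¬ (addTail H u w).Adj x y → y ∉ R ∪ {w} →
        s(x, y) ≠ s(w, kst) → s(x, y) ≠ (if G'.Adj u sst then s(u, sst) else s(w, sst)) →
        ¬ G'.Adj x y := by
      intro x y h1 h2 h3 h4 hadj
      have hmem : s(x, y) ∈ F \ F₁ := hF₂mem x y hadj h1 h2
      rw [← hEABeq, hAeq, hBeq, Set.image_singleton, Set.image_singleton] at hmem
      rcases hmem with hm | hm
      · exact h3 hm
      · exact h4 hm
    by_cases hust : G'.Adj u sst
    · -- case: the B-fill edge is u–sst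
      have hn1 : ¬ G'.Adj w sst := by
        apply hnotadj w sst
        · intro h
          rcases (hG₀adj w sst).mp h with h | ⟨h1, -⟩ | ⟨-, h2⟩
          · exact hw sst h
          · exact huw h1.symm
          · exact hunS sst hsstS h2.symm
        · exact hSQ sst hsstS
        · intro h
          rcases Sym2.eq_iff.mp h with ⟨-, h2⟩ | ⟨h1, -⟩
          · exact hKnS kst hkstK sst hsstS h2.symm
          · exact hwnK kst hkstK h1
        · rw [if_pos hust]
          intro h
          rcases Sym2.eq_iff.mp h with ⟨h1, -⟩ | ⟨h1, -⟩
          · exact huw h1.symm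
          · exact hwnS sst hsstS h1
      have hn2 : ¬ G'.Adj sst kst := by
        apply hnotadj sst kst
        · intro h
          rcases (hG₀adj sst kst).mp h with h | ⟨-, h2⟩ | ⟨h1, -⟩
          · exact ((hfadj sst hsstS kst hkstK).mp h) hfsst.symm
          · exact hwnK kst hkstK h2.symm
          · exact hwnS sst hsstS h1.symm
        · exact hKQ kst hkstK
        · intro h
          rcases Sym2.eq_iff.mp h with ⟨h1, -⟩ | ⟨h1, -⟩
          · exact hwnS sst hsstS h1.symm
          · exact hKnS kst hkstK sst hsstS h1.symm
        · rw [if_pos hust]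
          intro h
          rcases Sym2.eq_iff.mp h with ⟨h1, -⟩ | ⟨-, h2⟩
          · exact hunS sst hsstS h1.symm
          · exact hunK kst hkstK h2.symm
      have hP4 : ∀ k ∈ K, k ≠ kst → IsInducedP4 G' sst k kst w := by
        intro k hkK hkne
        refine ⟨Ne.symm (hKnS k hkK sst hsstS), Ne.symm (hKnS kst hkstK sst hsstS),
          Ne.symm (hwnS sst hsstS), hkne, Ne.symm (hwnK k hkK), Ne.symm (hwnK kst hkstK),
          hHle sst k ((hfadj sst hsstS k hkK).mpr (by rw [hfsst]; exact hkne)),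
          hHle k kst (hKcl hkK hkstK hkne), hwkst.symm, hn2, fun hh => hn1 hh.symm,
          fun hh => hnwk k hkK hkne hh.symm⟩
      refine hconf3 sst kst w ka kb (Ne.symm (hKnS kst hkstK sst hsstS))
        (Ne.symm (hwnS sst hsstS)) (Ne.symm (hKnS ka hkaK sst hsstS))
        (Ne.symm (hKnS kb hkbK sst hsstS)) (Ne.symm (hwnK kst hkstK))
        (Ne.symm hkane) (Ne.symm hkbne) (hwnK ka hkaK) (hwnK kb hkbK) hkab ?_ ?_
      · refine ⟨sst, ka, kst, w, ?_, hP4 ka hkaK hkane⟩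
        ext zz
        simp only [Set.mem_insert_iff, Set.mem_singleton_iff]
        tauto
      · refine ⟨sst, kb, kst, w, ?_, hP4 kb hkbK hkbne⟩
        ext zz
        simp only [Set.mem_insert_iff, Set.mem_singleton_iff]
        tauto
    · -- case: the B-fill edge is w–sst
      have hwsst : G'.Adj w sst := hsstor.resolve_left hust
      have hm1 : ∀ x ∈ S, x ≠ sst → ¬ G'.Adj x w :=
        fun x hx hne hh => (hnB x hx hne).2 hh.symm
      have hm2 : ∀ x ∈ S, x ≠ sst → ¬ G'.Adj x sst := by
        intro x hx hne
        apply hnotadj x sst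
        · intro h
          rcases (hG₀adj x sst).mp h with h | ⟨-, h2⟩ | ⟨h1, -⟩
          · exact hSind x hx sst hsstS h
          · exact hwnS sst hsstS h2.symm
          · exact hwnS x hx h1.symm
        · exact hSQ sst hsstS
        · intro h
          rcases Sym2.eq_iff.mp h with ⟨h1, -⟩ | ⟨-, h2⟩
          · exact hwnS x hx h1.symm
          · exact hwnS sst hsstS h2.symm
        · rw [if_neg hust]
          intro h
          rcases Sym2.eq_iff.mp h with ⟨h1, -⟩ | ⟨h1, -⟩
          · exact hwnS x hx h1.symm
          · exact hne h1
      have hm3 : ¬ G'.Adj kst sst := by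
        apply hnotadj kst sst
        · intro h
          rcases (hG₀adj kst sst).mp h with h | ⟨-, h2⟩ | ⟨h1, -⟩
          · exact ((hfadj sst hsstS kst hkstK).mp h.symm) hfsst.symm
          · exact hwnS sst hsstS h2.symm
          · exact hwnK kst hkstK h1.symm
        · exact hSQ sst hsstS
        · intro h
          rcases Sym2.eq_iff.mp h with ⟨h1, -⟩ | ⟨-, h2⟩
          · exact hwnK kst hkstK h1.symm
          · exact hwnS sst hsstS h2.symm
        · rw [if_neg hust]
          intro h
          rcases Sym2.eq_iff.mp h with ⟨h1, -⟩ | ⟨h1, -⟩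
          · exact hwnK kst hkstK h1.symm
          · exact hKnS kst hkstK sst hsstS h1
      have hSdiff : (S \ {sst}).ncard = 2 := by
        have := Set.ncard_diff_singleton_of_mem hsstS
        omega
      obtain ⟨sa, sb, hsab, hSabeq⟩ := Set.ncard_eq_two.mp hSdiff
      have hsaM : sa ∈ S \ {sst} := by rw [hSabeq]; simp
      have hsbM : sb ∈ S \ {sst} := by rw [hSabeq]; simp
      have hsaS : sa ∈ S := hsaM.1
      have hsbS : sb ∈ S := hsbM.1
      have hsane : sa ≠ sst := by simpa using hsaM.2
      have hsbne : sb ≠ sst := by simpa using hsbM.2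
      have hP4 : ∀ x ∈ S, x ≠ sst → IsInducedP4 G' x kst w sst := by
        intro x hx hne
        exact ⟨Ne.symm (hKnS kst hkstK x hx), Ne.symm (hwnS x hx), hne,
          Ne.symm (hwnK kst hkstK), hKnS kst hkstK sst hsstS, hwnS sst hsstS,
          hHle x kst ((hfadj x hx kst hkstK).mpr
            (fun hh => hne (hinj hx hsstS (hh.symm.trans hfsst.symm)))),
          hwkst.symm, hwsst, hm1 x hx hne, hm2 x hx hne, hm3⟩
      refine hconf3 kst w sst sa sb (Ne.symm (hwnK kst hkstK))
        (hKnS kst hkstK sst hsstS) (hKnS kst hkstK sa hsaS) (hKnS kst hkstK sb hsbS)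
        (hwnS sst hsstS) (hwnS sa hsaS) (hwnS sb hsbS) (Ne.symm hsane) (Ne.symm hsbne)
        hsab ?_ ?_
      · refine ⟨sa, kst, w, sst, ?_, hP4 sa hsaS hsane⟩
        ext zz
        simp only [Set.mem_insert_iff, Set.mem_singleton_iff]
        tauto
      · refine ⟨sb, kst, w, sst, ?_, hP4 sb hsbS hsbne⟩
        ext zz
        simp only [Set.mem_insert_iff, Set.mem_singleton_iff]
        tauto
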